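/- arXiv:2601.04987 — 2 statements merged into one kernel-verified Lean document; each statement's English description precedes it below -/
import Mathlib

section
/- Let E ⊆ 𝕋 be a Carleson set of Lebesgue measure zero and let α ∈ (0,1/2). Then for every ζ ∈ 𝕋∖E, D_{ζ, Γ(ζ,E)}(f_{α,E}) ≲ dist(ζ,E)^{2α} · ∫_{Γ(ζ,E)} log(dist(ζ,E)/dist(ζ',E)) |dζ'|/|ζ−ζ'|². -/
open MeasureTheory Real Set

noncomputable section

/-- The unit circle in `ℂ`. -/
def circleT : Set ℂ := Metric.sphere (0 : ℂ) 1

/-- Arc-length parametrization of the unit circle. -/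
def cpt (θ : ℝ) : ℂ := Complex.exp (θ * Complex.I)

/-- Distance from a point to a set. -/
def dE (E : Set ℂ) (ζ : ℂ) : ℝ := Metric.infDist ζ E

/-- Arc-length integral over the whole circle. -/
def circInt (f : ℂ → ℝ) : ℝ := ∫ θ in Set.Ioc 0 (2 * π), f (cpt θ)

/-- Arc-length integral over a subset `Λ` of the circle. -/
def circIntOn (Λ : Set ℂ) (f : ℂ → ℝ) : ℝ :=
  ∫ θ in {θ ∈ Set.Ioc 0 (2 * π) | cpt θ ∈ Λ}, f (cpt θ)

/-- `E` has arc-length (Lebesgue) measure zero. -/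
def MeasureZeroOnCircle (E : Set ℂ) : Prop :=
  volume {θ ∈ Set.Ioc 0 (2 * π) | cpt θ ∈ E} = 0

/-- `E` is a Carleson set: `∫_𝕋 log dist(ζ,E) |dζ| > -∞`. -/
def CarlesonSet (E : Set ℂ) : Prop :=
  IntegrableOn (fun θ => Real.log (dE E (cpt θ))) (Set.Ioc 0 (2 * π)) volume

/-- `I(ζ,E)`: the connected component of `𝕋 \ E` containing `ζ`. -/
def compArc (E : Set ℂ) (ζ : ℂ) : Set ℂ := connectedComponentIn (circleT \ E) ζ

/-- `Γ(ζ,E)`. -/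
def GammaSet (E : Set ℂ) (ζ : ℂ) : Set ℂ :=
  {ζ' ∈ circleT \ compArc E ζ | dE E ζ' ≤ dE E ζ}

/-- `Σ(ζ,E)`. -/
def SigmaSet (E : Set ℂ) (ζ : ℂ) : Set ℂ :=
  {ζ' ∈ circleT \ compArc E ζ | dE E ζ ≤ dE E ζ'}

/-- The Richter–Sundberg integrand for the outer function with boundary modulus
`ω(dist(·,E))`. -/
def RSker (ω : ℝ → ℝ) (E : Set ℂ) (ζ ζ' : ℂ) : ℝ :=
  ((ω (dE E ζ')) ^ 2 - (ω (dE E ζ)) ^ 2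
    - 2 * (ω (dE E ζ)) ^ 2 * Real.log (ω (dE E ζ') / ω (dE E ζ))) / ‖ζ - ζ'‖ ^ 2

/-- Local Dirichlet integral `D_ζ(f_{ω,E})` (Richter–Sundberg formula). -/
def locDir (ω : ℝ → ℝ) (E : Set ℂ) (ζ : ℂ) : ℝ :=
  (1 / (2 * π)) * circInt (fun ζ' => RSker ω E ζ ζ')

/-- Local Dirichlet integral restricted to `Λ`. -/
def locDirOn (ω : ℝ → ℝ) (E : Set ℂ) (Λ : Set ℂ) (ζ : ℂ) : ℝ :=
  (1 / (2 * π)) * circIntOn Λ (fun ζ' => RSker ω E ζ ζ')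

/-- `E` is an `𝓛₁`-set. -/
def L1Set (E : Set ℂ) : Prop :=
  ∃ C > 0, ∀ ζ ∈ circleT \ E,
    circIntOn (GammaSet E ζ)
      (fun ζ' => Real.log (dE E ζ / dE E ζ') / ‖ζ - ζ'‖ ^ 2) ≤ C / dE E ζ

/-- The `𝓛₂` inequality with constant `C`. -/
def L2With (E : Set ℂ) (C : ℝ) : Prop :=
  ∀ ζ ∈ circleT \ E,
    circIntOn (GammaSet E ζ)
      (fun ζ' => (Real.log (dE E ζ / dE E ζ')) ^ 2 / ‖ζ - ζ'‖ ^ 2) ≤ C / dE E ζ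

/-- `E` is an `𝓛₂`-set. -/
def L2Set (E : Set ℂ) : Prop := ∃ C > 0, L2With E C

/-- Supremum of `dist(·,E)` over the arc `cpt '' (a,b]`. -/
def arcSup (E : Set ℂ) (a b : ℝ) : ℝ := sSup ((fun θ => dE E (cpt θ)) '' Set.Ioc a b)

/-- `E` is a `𝒦`-set (Kotochigov). -/
def KSet (E : Set ℂ) : Prop :=
  ∃ c > 0, ∀ a b : ℝ, a < b → b ≤ a + 2 * π → c * (b - a) ≤ arcSup E a b

/-- Integral of a weight over the arc `cpt '' (a,b]` (with respect to arc length). -/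
def arcInt (w : ℂ → ℝ) (a b : ℝ) : ℝ := ∫ θ in Set.Ioc a b, w (cpt θ)

/-- Double logarithmic integral of a weight over an arc. -/
def arcDouble (w : ℂ → ℝ) (a b : ℝ) : ℝ :=
  ∫ θ in Set.Ioc a b, (∫ θ' in Set.Ioc a b,
    Real.log (1 / ‖cpt θ - cpt θ'‖) * w (cpt θ) * w (cpt θ'))

/-- Arc-length measure of `{ζ ∈ I : dist(ζ,E) ≤ t}` for the arc `cpt '' (a,b]`. -/
def sublevelMeas (E : Set ℂ) (a b t : ℝ) : ℝ :=
  (volume {θ ∈ Set.Ioc a b | dE E (cpt θ) ≤ t}).toReal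

/-- Arc-length measure of `E_t = {ζ ∈ 𝕋 : dist(ζ,E) ≤ t}`. -/
def EtMeas (E : Set ℂ) (t : ℝ) : ℝ := sublevelMeas E 0 (2 * π) t

/-- The open unit disc. -/
def unitDisc : Set ℂ := Metric.ball (0 : ℂ) 1

/-- Membership in the (holomorphic) Dirichlet space `𝒟`. -/
def MemDirichlet (f : ℂ → ℂ) : Prop :=
  DifferentiableOn ℂ f unitDisc ∧
  (∃ M : ℝ, ∀ r ∈ Set.Ioo (0 : ℝ) 1,
    (∫ θ in Set.Ioc 0 (2 * π), ‖f ((r : ℂ) * cpt θ)‖ ^ 2) ≤ M) ∧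
  IntegrableOn (fun z => ‖deriv f z‖ ^ 2) unitDisc volume

/-- `f` is a multiplier of the Dirichlet space `𝒟`. -/
def IsMultiplierD (f : ℂ → ℂ) : Prop :=
  ∀ g : ℂ → ℂ, MemDirichlet g → MemDirichlet (fun z => f z * g z)

/-- The outer function `f_{ω,E}` with boundary modulus `ω(dist(·,E))`. -/
def outerFun (ω : ℝ → ℝ) (E : Set ℂ) (z : ℂ) : ℂ :=
  Complex.exp ((((2 * π)⁻¹ : ℝ) : ℂ) * ∫ θ in Set.Ioc 0 (2 * π),
    ((cpt θ + z) / (cpt θ - z)) * ((Real.log (ω (dE E (cpt θ))) : ℝ) : ℂ))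

/-- `log ω(dist(·,E)) ∈ L¹(𝕋)`. -/
def LogOmegaInt (ω : ℝ → ℝ) (E : Set ℂ) : Prop :=
  IntegrableOn (fun θ => Real.log (ω (dE E (cpt θ)))) (Set.Ioc 0 (2 * π)) volume

/-- Standing hypotheses on `ω` (with derivative `ω'`): continuous, positive, increasing on
`(0,π]`, differentiable with derivative `ω'`, `t ↦ ω(t^γ)` concave, and `t ↦ tω'(t)/ω(t)`
increasing. -/
def OmegaHyp (ω ω' : ℝ → ℝ) (γ : ℝ) : Prop :=
  ContinuousOn ω (Set.Ioc 0 π) ∧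
  (∀ t ∈ Set.Ioc (0 : ℝ) π, 0 < ω t) ∧
  MonotoneOn ω (Set.Ioc 0 π) ∧
  (∀ t ∈ Set.Ioo (0 : ℝ) π, HasDerivAt ω (ω' t) t) ∧
  ConcaveOn ℝ (Set.Ioc 0 (π ^ γ⁻¹)) (fun t => ω (t ^ γ)) ∧
  MonotoneOn (fun t => t * ω' t / ω t) (Set.Ioo 0 π)

/-- The generalized Cantor set `E_{(ζ_n)}` (with `ξ k` playing the role of `ζ_{k+1}`). -/
def gCantorSet (ξ : ℕ → ℝ) : Set ℂ :=
  {z | ∃ ε : ℕ → Bool, z = Complex.exp (((2 * π : ℝ) : ℂ) * Complex.I *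
    ((∑' n : ℕ, (if ε n then (1 : ℝ) else 0) * (∏ k ∈ Finset.range n, ξ k) * (1 - ξ n) : ℝ) : ℂ))}

end



lemma norm_exp_sub_one_sq' (θ : ℝ) : ‖Complex.exp (θ * Complex.I) - 1‖ ^ 2 = 2 - 2 * Real.cos θ := by
  rw [Complex.sq_norm, Complex.normSq_apply]
  simp only [Complex.sub_re, Complex.sub_im, Complex.exp_ofReal_mul_I_re,
    Complex.exp_ofReal_mul_I_im, Complex.one_re, Complex.one_im]
  nlinarith [Real.sin_sq_add_cos_sq θ]

lemma norm_exp_sub_one_mono' {x y : ℝ} (h : |x| ≤ |y|) (hy : |y| ≤ π) :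
    ‖Complex.exp (x * Complex.I) - 1‖ ≤ ‖Complex.exp (y * Complex.I) - 1‖ := by
  have h1 : Real.cos y ≤ Real.cos x := by
    rw [← Real.cos_abs x, ← Real.cos_abs y]
    exact Real.cos_le_cos_of_nonneg_of_le_pi (abs_nonneg _) hy h
  have h2 : ‖Complex.exp (x * Complex.I) - 1‖ ^ 2 ≤ ‖Complex.exp (y * Complex.I) - 1‖ ^ 2 := by
    rw [norm_exp_sub_one_sq', norm_exp_sub_one_sq']; linarith
  have := Real.sqrt_le_sqrt h2
  rwa [Real.sqrt_sq (norm_nonneg _), Real.sqrt_sq (norm_nonneg _)] at this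

lemma gamma_dist' (E : Set ℂ) {ζ ζ' : ℂ} (hζ : ζ ∈ circleT \ E) (hζ' : ζ' ∈ circleT)
    (hnc : ζ' ∉ compArc E ζ) : dE E ζ ≤ ‖ζ - ζ'‖ := by
  by_contra h
  push_neg at h
  have hζ1 : ‖ζ‖ = 1 := by simpa [circleT] using hζ.1
  have hζ'1 : ‖ζ'‖ = 1 := by simpa [circleT] using hζ'
  have hζ0 : ζ ≠ 0 := by intro h0; rw [h0] at hζ1; simp at hζ1
  set w : ℂ := ζ' * ζ⁻¹ with hw
  have hw1 : ‖w‖ = 1 := by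
    simp [hw, hζ1, hζ'1]
  set s : ℝ := Complex.arg w with hs
  have hexp : Complex.exp (s * Complex.I) = w := by
    have := Complex.norm_mul_exp_arg_mul_I w
    rwa [hw1, Complex.ofReal_one, one_mul] at this
  have hspi : |s| ≤ π := abs_le.mpr ⟨(Complex.neg_pi_lt_arg w).le, Complex.arg_le_pi w⟩
  set p : ℝ → ℂ := fun u => ζ * Complex.exp ((u * s : ℝ) * Complex.I) with hp
  have hcont : Continuous p := by
    apply continuous_const.mul
    exact Complex.continuous_exp.comp (by continuity)
  set A : Set ℂ := p '' Set.Icc 0 1 with hA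
  have hAconn : IsPreconnected A := (isPreconnected_Icc).image p hcont.continuousOn
  have hζA : ζ ∈ A := ⟨0, by simp, by simp [hp]⟩
  have hζ'A : ζ' ∈ A := by
    refine ⟨1, by simp, ?_⟩
    simp only [hp, one_mul, hexp, hw]
    field_simp
  have hnorm : ∀ u ∈ Set.Icc (0:ℝ) 1, ‖p u - ζ‖ < dE E ζ := by
    intro u hu
    have h1 : p u - ζ = ζ * (Complex.exp ((u * s : ℝ) * Complex.I) - 1) := by ring
    have h2 : ‖p u - ζ‖ = ‖Complex.exp ((u * s : ℝ) * Complex.I) - 1‖ := by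
      rw [h1, norm_mul, hζ1, one_mul]
    have h3 : |u * s| ≤ |s| := by
      rw [abs_mul]
      have : |u| ≤ 1 := by rw [abs_le]; constructor <;> linarith [hu.1, hu.2]
      nlinarith [abs_nonneg s]
    have h4 : ‖Complex.exp ((u * s : ℝ) * Complex.I) - 1‖ ≤
        ‖Complex.exp ((s : ℝ) * Complex.I) - 1‖ := norm_exp_sub_one_mono' h3 hspi
    have h5 : ‖Complex.exp ((s : ℝ) * Complex.I) - 1‖ = ‖ζ - ζ'‖ := by
      rw [hexp]
      have : w - 1 = (ζ' - ζ) * ζ⁻¹ := by rw [hw, sub_mul, mul_inv_cancel₀ hζ0]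
      rw [this, norm_mul, norm_inv, hζ1]; simp [norm_sub_rev]
    rw [h2]; rw [h5] at h4; exact lt_of_le_of_lt h4 h
  have hAsub : A ⊆ circleT \ E := by
    rintro ξ ⟨u, hu, rfl⟩
    constructor
    · have : ‖p u‖ = 1 := by
        rw [hp]; simp only [norm_mul, hζ1, one_mul]
        rw [Complex.norm_exp_ofReal_mul_I]
      simpa [circleT] using this
    · intro hξE
      have h1 : dE E ζ ≤ dist ζ (p u) := Metric.infDist_le_dist_of_mem hξE
      rw [dist_eq_norm, ← norm_sub_rev] at h1
      exact absurd h1 (not_le.mpr (hnorm u hu))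
  exact hnc (hAconn.subset_connectedComponentIn hζA hAsub hζ'A)

lemma pointwise_bounds' {α δ δ' d : ℝ} (hα : 0 < α) (hδ : 0 < δ) (hδ' : 0 < δ')
    (hle : δ' ≤ δ) (hd : δ ≤ d) :
    0 ≤ ((δ' ^ α) ^ 2 - (δ ^ α) ^ 2 - 2 * (δ ^ α) ^ 2 * Real.log (δ' ^ α / δ ^ α)) / d ^ 2 ∧
    ((δ' ^ α) ^ 2 - (δ ^ α) ^ 2 - 2 * (δ ^ α) ^ 2 * Real.log (δ' ^ α / δ ^ α)) / d ^ 2 ≤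
      2 * α * δ ^ (2*α) * (Real.log (δ / δ') / d ^ 2) ∧
    |Real.log (δ / δ') / d ^ 2| ≤ (|Real.log δ| + |Real.log δ'|) / δ ^ 2 ∧
    0 ≤ Real.log (δ / δ') / d ^ 2 := by
  have hdpos : 0 < d := lt_of_lt_of_le hδ hd
  set p := δ' ^ α with hpdef
  set q := δ ^ α with hqdef
  have hp : 0 < p := Real.rpow_pos_of_pos hδ' α
  have hq : 0 < q := Real.rpow_pos_of_pos hδ α
  have hpq : p ≤ q := Real.rpow_le_rpow hδ'.le hle hα.le
  have hlogpq : Real.log (p / q) = α * (Real.log δ' - Real.log δ) := by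
    rw [Real.log_div hp.ne' hq.ne', hpdef, hqdef, Real.log_rpow hδ', Real.log_rpow hδ]; ring
  have hlogd : Real.log (δ / δ') = Real.log δ - Real.log δ' := Real.log_div hδ.ne' hδ'.ne'
  have hlognn : 0 ≤ Real.log (δ / δ') := Real.log_nonneg ((one_le_div hδ').mpr hle)
  have hq2 : q ^ 2 = δ ^ (2*α) := by
    rw [pow_two, hqdef, ← Real.rpow_add hδ]; ring_nf
  have hN1 : 0 ≤ p^2 - q^2 - 2*q^2*Real.log (p/q) := by
    have hk : Real.log (p/q) ≤ p/q - 1 := Real.log_le_sub_one_of_pos (div_pos hp hq)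
    have h2 : q^2 * (p/q) = p * q := by field_simp
    nlinarith [sq_nonneg (p - q), mul_le_mul_of_nonneg_left hk (by positivity : (0:ℝ) ≤ 2*q^2)]
  have hN2 : p^2 - q^2 - 2*q^2*Real.log (p/q) ≤ 2*α*δ^(2*α) * Real.log (δ/δ') := by
    have hpq2 : p^2 ≤ q^2 := by nlinarith
    rw [hlogpq, hlogd, ← hq2]; nlinarith
  refine ⟨div_nonneg hN1 (by positivity), ?_, ?_, div_nonneg hlognn (by positivity)⟩
  · have h1 : (p^2 - q^2 - 2*q^2*Real.log (p/q)) / d^2 ≤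
        (2*α*δ^(2*α) * Real.log (δ/δ')) / d^2 :=
      (div_le_div_iff_of_pos_right (by positivity)).mpr hN2
    calc (p ^ 2 - q ^ 2 - 2 * q ^ 2 * Real.log (p / q)) / d ^ 2
        ≤ (2*α*δ^(2*α) * Real.log (δ/δ')) / d^2 := h1
      _ = 2*α*δ^(2*α) * (Real.log (δ/δ') / d^2) := by ring
  · rw [abs_div, abs_of_nonneg (by positivity : (0:ℝ) ≤ d^2), hlogd]
    have htri : |Real.log δ - Real.log δ'| ≤ |Real.log δ| + |Real.log δ'| := by
      rw [sub_eq_add_neg]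
      exact (abs_add_le _ _).trans (by rw [abs_neg])
    exact div_le_div₀ (by positivity) htri (by positivity) (pow_le_pow_left₀ hδ.le hd 2)

/-- For a Carleson set `E` of measure zero and `α ∈ (0,1/2)`,
`D_{ζ,Γ(ζ,E)}(f_{α,E}) ≲ dist(ζ,E)^{2α} ·
∫_{Γ(ζ,E)} log(dist(ζ,E)/dist(ζ',E)) |dζ'|/|ζ−ζ'|²` for all `ζ ∈ 𝕋∖E`. -/
theorem statement5 (E : Set ℂ) (hEc : IsClosed E) (hEsub : E ⊆ circleT)
    (hEz : MeasureZeroOnCircle E) (hEcar : CarlesonSet E)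
    (α : ℝ) (hα : α ∈ Set.Ioo (0:ℝ) (1/2)) :
    ∃ C > (0:ℝ), ∀ ζ ∈ circleT \ E,
      locDirOn (fun t => t ^ α) E (GammaSet E ζ) ζ ≤
        C * (dE E ζ ^ (2 * α) *
          circIntOn (GammaSet E ζ)
            (fun ζ' => Real.log (dE E ζ / dE E ζ') / ‖ζ - ζ'‖ ^ 2)) := by
  obtain ⟨hα0, hα2⟩ := hα
  refine ⟨1, one_pos, ?_⟩
  intro ζ hζ
  by_cases hE : E = ∅
  · subst hE
    have hRS : ∀ ζ' : ℂ, RSker (fun t => t ^ α) ∅ ζ ζ' = 0 := by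
      intro ζ'
      simp [RSker, dE, Metric.infDist_empty, Real.zero_rpow (ne_of_gt hα0)]
    have h1 : locDirOn (fun t => t ^ α) ∅ (GammaSet ∅ ζ) ζ = 0 := by
      simp only [locDirOn, circIntOn, hRS]
      simp
    rw [h1]
    have h0 : dE (∅ : Set ℂ) ζ = 0 := Metric.infDist_empty
    rw [h0, Real.zero_rpow (by positivity : (2:ℝ)*α ≠ 0)]
    simp
  · have hEne : E.Nonempty := Set.nonempty_iff_ne_empty.mpr hE
    have hcpt : Continuous cpt :=
      Complex.continuous_exp.comp (Complex.continuous_ofReal.mul continuous_const)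
    have hdcont : Continuous fun θ => dE E (cpt θ) :=
      (Metric.continuous_infDist_pt E).comp hcpt
    simp only [locDirOn, circIntOn]
    set δ := dE E ζ with hδdef
    have hδ : 0 < δ := (hEc.notMem_iff_infDist_pos hEne).1 hζ.2
    set S : Set ℝ := {θ | θ ∈ Set.Ioc 0 (2*π) ∧ cpt θ ∈ GammaSet E ζ} with hSdef
    set F : ℝ → ℝ := fun θ => RSker (fun t => t ^ α) E ζ (cpt θ) with hFdef
    set G : ℝ → ℝ := fun θ => Real.log (δ / dE E (cpt θ)) / ‖ζ - cpt θ‖ ^ 2 with hGdef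
    set H : ℝ → ℝ := fun θ => (|Real.log δ| + |Real.log (dE E (cpt θ))|) / δ ^ 2 with hHdef
    have hrpc : Continuous (fun x : ℝ => x ^ α) := Real.continuous_rpow_const hα0.le
    have hGmeas : Measurable G := by
      apply Measurable.div
      · exact Real.measurable_log.comp (measurable_const.div hdcont.measurable)
      · exact ((continuous_const.sub hcpt).norm.pow 2).measurable
    have hHmeas : Measurable H := by
      apply Measurable.div _ measurable_const
      exact measurable_const.add (Real.measurable_log.comp hdcont.measurable).abs
    have hFmeas : Measurable F := by
      simp only [hFdef, RSker]
      apply Measurable.div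
      · apply Measurable.sub
        · apply Measurable.sub
          · exact (Continuous.pow (hrpc.comp hdcont) 2).measurable
          · exact measurable_const
        · exact (measurable_const.mul
            (Real.measurable_log.comp ((hrpc.comp hdcont).measurable.div_const _)))
      · exact ((continuous_const.sub hcpt).norm.pow 2).measurable
    -- pointwise facts on S away from E
    have hfacts : ∀ θ, θ ∈ S → cpt θ ∉ E →
        (0 ≤ F θ ∧ F θ ≤ 2*α*δ^(2*α) * G θ ∧ ‖G θ‖ ≤ H θ ∧ 0 ≤ G θ) := by
      intro θ hθS hnE
      have hΓ : cpt θ ∈ GammaSet E ζ := hθS.2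
      have hδ' : 0 < dE E (cpt θ) := (hEc.notMem_iff_infDist_pos hEne).1 hnE
      have hle : dE E (cpt θ) ≤ δ := hΓ.2
      have hd : δ ≤ ‖ζ - cpt θ‖ := gamma_dist' E hζ hΓ.1.1 hΓ.1.2
      obtain ⟨hb1, hb2, hb3, hb4⟩ := pointwise_bounds' hα0 hδ hδ' hle hd
      have hFθ : F θ = ((dE E (cpt θ) ^ α) ^ 2 - (δ ^ α) ^ 2
          - 2 * (δ ^ α) ^ 2 * Real.log (dE E (cpt θ) ^ α / δ ^ α)) / ‖ζ - cpt θ‖ ^ 2 := rfl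
      refine ⟨?_, ?_, ?_, hb4⟩
      · rw [hFθ]; exact hb1
      · rw [hFθ]; exact hb2
      · rw [Real.norm_eq_abs]; exact hb3
    have key_ae : ∀ (P : ℝ → Prop), MeasurableSet {θ | P θ} →
        (∀ θ, θ ∈ S → cpt θ ∉ E → P θ) → ∀ᵐ θ ∂(volume.restrict S), P θ := by
      intro P hPm hPS
      rw [ae_iff, ← Set.compl_setOf, Measure.restrict_apply hPm.compl]
      refine measure_mono_null ?_ hEz
      rintro θ ⟨hnp, hθS⟩
      exact ⟨hθS.1, by_contra fun hc => hnp (hPS θ hθS hc)⟩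
    have hHS : IntegrableOn H S volume := by
      have h1 : IntegrableOn (fun θ => |Real.log δ| + |Real.log (dE E (cpt θ))|)
          (Set.Ioc 0 (2*π)) volume :=
        (integrableOn_const measure_Ioc_lt_top.ne).add hEcar.abs
      have h2 : IntegrableOn H (Set.Ioc 0 (2*π)) volume := h1.div_const (δ^2)
      exact h2.mono_set (fun θ hθ => hθ.1)
    have hGint : Integrable G (volume.restrict S) := by
      refine Integrable.mono' hHS hGmeas.aestronglyMeasurable ?_
      exact key_ae _ (measurableSet_le hGmeas.norm hHmeas)
        (fun θ h1 h2 => (hfacts θ h1 h2).2.2.1)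
    have haeF : ∀ᵐ θ ∂(volume.restrict S), ‖F θ‖ ≤ 2*α*δ^(2*α) * G θ := by
      refine key_ae _ (measurableSet_le hFmeas.norm (hGmeas.const_mul _)) ?_
      intro θ h1 h2
      obtain ⟨ha, hb, _, _⟩ := hfacts θ h1 h2
      rw [Real.norm_eq_abs, abs_of_nonneg ha]; exact hb
    have hFint : Integrable F (volume.restrict S) :=
      Integrable.mono' (hGint.const_mul _) hFmeas.aestronglyMeasurable haeF
    have hGnn : 0 ≤ᵐ[volume.restrict S] G :=
      key_ae _ (measurableSet_le measurable_const hGmeas)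
        (fun θ h1 h2 => (hfacts θ h1 h2).2.2.2)
    have hIG : 0 ≤ ∫ θ in S, G θ := integral_nonneg_of_ae hGnn
    have hmain : ∫ θ in S, F θ ≤ 2*α*δ^(2*α) * ∫ θ in S, G θ := by
      have h1 : ∫ θ in S, F θ ≤ ∫ θ in S, 2*α*δ^(2*α) * G θ := by
        refine integral_mono_ae hFint (hGint.const_mul _) ?_
        exact haeF.mono (fun θ h => (le_abs_self _).trans (by rwa [← Real.norm_eq_abs]))
      rwa [integral_const_mul] at h1
    have hδ2α : 0 ≤ δ^(2*α) := (Real.rpow_pos_of_pos hδ _).le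
    have hπ := Real.pi_gt_three
    rw [one_mul, one_div, inv_mul_le_iff₀ (by positivity : (0:ℝ) < 2*π)]
    nlinarith [mul_nonneg hδ2α hIG, hmain]
end

section
/- Let (ζ_n)_{n≥1} be a sequence with 0 < ζ_n < 1/2 for all n, and let E = E_{(ζ_n)} be the associated generalized Cantor set. If limsup_{n→∞} ζ_n < 1/2, then E is a 𝒦-set. -/
open MeasureTheory Real Set

noncomputable section
namespace S9
set_option linter.unusedSectionVars false
set_option linter.unnecessarySeqFocus false
set_option linter.unusedVariables false

variable {ξ : ℕ → ℝ}

def L (ξ : ℕ → ℝ) (n : ℕ) : ℝ := ∏ k ∈ Finset.range n, ξ k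

def trm (ξ : ℕ → ℝ) (ε : ℕ → Bool) (n : ℕ) : ℝ :=
  (if ε n then (1 : ℝ) else 0) * (∏ k ∈ Finset.range n, ξ k) * (1 - ξ n)

def pt (ξ : ℕ → ℝ) (ε : ℕ → Bool) : ℝ := ∑' n, trm ξ ε n

def pre (ξ : ℕ → ℝ) (ε : ℕ → Bool) (n : ℕ) : ℝ := ∑ k ∈ Finset.range n, trm ξ ε k

def tl (ξ : ℕ → ℝ) (ε : ℕ → Bool) (n : ℕ) : ℝ := ∑' m, trm ξ ε (m + n)

lemma trm_eq (ε : ℕ → Bool) (n : ℕ) :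
    trm ξ ε n = (if ε n then (1 : ℝ) else 0) * L ξ n * (1 - ξ n) := rfl

section basic

variable (hξ : ∀ n, ξ n ∈ Set.Ioo (0:ℝ) (1/2))
include hξ

lemma Lpos (n : ℕ) : 0 < L ξ n := Finset.prod_pos fun k _ => (hξ k).1

lemma Lsucc (n : ℕ) : L ξ (n+1) = L ξ n * ξ n := Finset.prod_range_succ _ _

lemma Lle (n : ℕ) : L ξ n ≤ (1/2)^n := by
  have : ((1:ℝ)/2)^n = ∏ _k ∈ Finset.range n, (1/2:ℝ) := by simp
  rw [this, L]
  exact Finset.prod_le_prod (fun k _ => (hξ k).1.le) (fun k _ => (hξ k).2.le)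

lemma trm_nonneg (ε : ℕ → Bool) (n : ℕ) : 0 ≤ trm ξ ε n := by
  rw [trm_eq]
  have h1 := (Lpos hξ n).le
  have h2 := (hξ n).2
  cases hb : ε n <;> simp [hb] <;> nlinarith

lemma trm_le (ε : ℕ → Bool) (n : ℕ) : trm ξ ε n ≤ L ξ n - L ξ (n+1) := by
  rw [trm_eq, Lsucc hξ]
  have h1 := (Lpos hξ n).le
  have h2 := (hξ n).2
  cases hb : ε n <;> simp [hb] <;> nlinarith

lemma LsubL_nonneg (n : ℕ) : 0 ≤ L ξ n - L ξ (n+1) := by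
  rw [Lsucc hξ]
  have h1 := (Lpos hξ n).le
  have h2 := (hξ n).2
  nlinarith

lemma summable_trm (ε : ℕ → Bool) : Summable (trm ξ ε) := by
  refine Summable.of_nonneg_of_le (trm_nonneg hξ ε) (fun n => ?_)
    (summable_geometric_of_lt_one (by norm_num) (by norm_num : (1/2:ℝ) < 1))
  exact (trm_le hξ ε n).trans (by linarith [(Lpos hξ (n+1)).le, Lle hξ n])

lemma summable_trm_shift (ε : ℕ → Bool) (n : ℕ) : Summable (fun m => trm ξ ε (m + n)) :=
  (summable_nat_add_iff n).2 (summable_trm hξ ε)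

lemma pt_split (ε : ℕ → Bool) (n : ℕ) : pt ξ ε = pre ξ ε n + tl ξ ε n :=
  (Summable.sum_add_tsum_nat_add n (summable_trm hξ ε)).symm

lemma tl_nonneg (ε : ℕ → Bool) (n : ℕ) : 0 ≤ tl ξ ε n :=
  tsum_nonneg fun m => trm_nonneg hξ ε _

lemma tl_le (ε : ℕ → Bool) (n : ℕ) : tl ξ ε n ≤ L ξ n := by
  have hsumg : Summable (fun m => L ξ (m + n) - L ξ (m + n + 1)) := by
    refine Summable.of_nonneg_of_le (fun m => LsubL_nonneg hξ _) (fun m => ?_)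
      (summable_geometric_of_lt_one (by norm_num) (by norm_num : (1/2:ℝ) < 1))
    have h1 := (Lpos hξ (m + n + 1)).le
    have h2 := Lle hξ (m + n)
    have h3 : ((1:ℝ)/2)^(m+n) ≤ (1/2)^m := by
      rw [pow_add]
      have : ((1:ℝ)/2)^n ≤ 1 := pow_le_one₀ (by norm_num) (by norm_num)
      nlinarith [pow_nonneg (by norm_num : (0:ℝ) ≤ 1/2) m]
    linarith
  have h1 : tl ξ ε n ≤ ∑' m, (L ξ (m + n) - L ξ (m + n + 1)) :=
    Summable.tsum_le_tsum (fun m => trm_le hξ ε (m + n)) (summable_trm_shift hξ ε n) hsumg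
  refine h1.trans (Real.tsum_le_of_sum_range_le (fun m => LsubL_nonneg hξ _) (fun j => ?_))
  have : ∑ m ∈ Finset.range j, (L ξ (m + n) - L ξ (m + n + 1)) = L ξ n - L ξ (j + n) := by
    have h := Finset.sum_range_sub' (fun i => L ξ (i + n)) j
    have e : ∀ i : ℕ, i + 1 + n = i + n + 1 := fun i => by omega
    simp only [e, Nat.zero_add] at h
    exact h
  rw [this]
  linarith [(Lpos hξ (j + n)).le]

lemma tl_succ (ε : ℕ → Bool) (n : ℕ) : tl ξ ε n = trm ξ ε n + tl ξ ε (n+1) := by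
  have h := Summable.tsum_eq_zero_add (summable_trm_shift hξ ε n)
  simp only [Nat.zero_add] at h
  rw [tl, h, tl]
  congr 1
  exact tsum_congr fun m => by ring_nf

lemma tl_gap (ε : ℕ → Bool) (n : ℕ) :
    tl ξ ε n ≤ L ξ n * ξ n ∨ L ξ n * (1 - ξ n) ≤ tl ξ ε n := by
  rw [tl_succ hξ]
  have h1 := tl_nonneg hξ ε (n+1)
  have h2 := tl_le hξ ε (n+1)
  rw [Lsucc hξ] at h2
  cases hb : ε n
  · left; rw [trm_eq]; simp [hb]; linarith
  · right; rw [trm_eq]; simp [hb]; linarith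

lemma pre_nonneg (ε : ℕ → Bool) (n : ℕ) : 0 ≤ pre ξ ε n :=
  Finset.sum_nonneg fun k _ => trm_nonneg hξ ε k

lemma pre_succ (ε : ℕ → Bool) (n : ℕ) : pre ξ ε (n+1) = pre ξ ε n + trm ξ ε n :=
  Finset.sum_range_succ _ _

lemma nest (ε : ℕ → Bool) {j n : ℕ} (hjn : j ≤ n) :
    pre ξ ε j ≤ pre ξ ε n ∧ pre ξ ε n + L ξ n ≤ pre ξ ε j + L ξ j := by
  induction n, hjn using Nat.le_induction with
  | base => exact ⟨le_rfl, le_rfl⟩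
  | succ n hjn ih =>
    have h1 := trm_nonneg hξ ε n
    have h2 : trm ξ ε n + L ξ (n+1) ≤ L ξ n := by
      rw [trm_eq, Lsucc hξ]
      have := (Lpos hξ n).le
      have := (hξ n).2
      cases hb : ε n <;> simp [hb] <;> nlinarith
    rw [pre_succ hξ]
    exact ⟨ih.1.trans (by linarith), by linarith [ih.2]⟩

lemma pt_nonneg (ε : ℕ → Bool) : 0 ≤ pt ξ ε := tsum_nonneg fun m => trm_nonneg hξ ε m

lemma pt_le_one (ε : ℕ → Bool) : pt ξ ε ≤ 1 := by
  have h := pt_split hξ ε 0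
  have h2 := tl_le hξ ε 0
  have h3 : L ξ 0 = 1 := by simp [L]
  have h4 : pre ξ ε 0 = 0 := by simp [pre]
  rw [h3] at h2
  rw [h, h4, zero_add]
  exact h2


lemma avoid (ε ε' : ℕ → Bool) (n : ℕ) :
    pt ξ ε' ∉ Set.Ioo (pre ξ ε n + L ξ n * ξ n) (pre ξ ε n + L ξ n * (1 - ξ n)) := by
  classical
  rintro ⟨h1, h2⟩
  by_cases hag : ∀ k < n, ε' k = ε k
  · have hpre : pre ξ ε' n = pre ξ ε n :=
      Finset.sum_congr rfl fun k hk => by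
        rw [trm_eq, trm_eq, hag k (Finset.mem_range.mp hk)]
    rw [pt_split hξ ε' n, hpre] at h1 h2
    rcases tl_gap hξ ε' n with h | h <;> linarith
  · push_neg at hag
    obtain ⟨k0, hk0n, hk0⟩ := hag
    have hex : ∃ k, k < n ∧ ε' k ≠ ε k := ⟨k0, hk0n, hk0⟩
    set j := Nat.find hex with hj
    obtain ⟨hjn, hjne⟩ := Nat.find_spec hex
    have hmin : ∀ i < j, ε' i = ε i := fun i hi => by
      by_contra hc
      exact absurd ⟨lt_trans hi hjn, hc⟩ (Nat.find_min hex hi)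
    have hpre : pre ξ ε' j = pre ξ ε j :=
      Finset.sum_congr rfl fun k hk => by
        rw [trm_eq, trm_eq, hmin k (Finset.mem_range.mp hk)]
    have hsplit : pt ξ ε' = pre ξ ε j + tl ξ ε' j := by
      rw [pt_split hξ ε' j, hpre]
    have hnest := nest hξ ε (show j + 1 ≤ n from hjn)
    have hLj := Lpos hξ j
    have hLj1 := Lpos hξ (j+1)
    have hLn := Lpos hξ n
    have hxj := hξ j
    have hxn := hξ n
    have hLs := Lsucc hξ j
    cases hb : ε j
    · -- ε j = false, ε' j = true
      have hb' : ε' j = true := by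
        cases hb2 : ε' j
        · exact absurd (hb2.trans hb.symm) hjne
        · rfl
      have hge : L ξ j * (1 - ξ j) ≤ tl ξ ε' j := by
        rw [tl_succ hξ, trm_eq, hb']
        have := tl_nonneg hξ ε' (j+1)
        simp only [if_true, one_mul]
        linarith
      have hpj : pre ξ ε (j+1) = pre ξ ε j := by
        rw [pre_succ hξ, trm_eq, hb]; simp
      -- pt ε' ≥ pre ε j + L j (1-ξ j) ≥ pre ε (j+1) + L (j+1) ≥ pre ε n + L n
      have key : pre ξ ε n + L ξ n ≤ pt ξ ε' := by
        rw [hsplit]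
        have h5 : L ξ (j+1) ≤ L ξ j * (1 - ξ j) := by rw [hLs]; nlinarith [hxj.1, hxj.2]
        have := hnest.2
        rw [hpj] at this
        linarith
      nlinarith [hxn.1, hxn.2]
    · -- ε j = true, ε' j = false
      have hb' : ε' j = false := by
        cases hb2 : ε' j
        · rfl
        · exact absurd (hb2.trans hb.symm) hjne
      have hle : tl ξ ε' j ≤ L ξ (j+1) := by
        rw [tl_succ hξ, trm_eq, hb']
        have := tl_le hξ ε' (j+1)
        norm_num
        linarith
      have hpj : pre ξ ε (j+1) = pre ξ ε j + L ξ j * (1 - ξ j) := by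
        rw [pre_succ hξ, trm_eq, hb]; simp
      have key : pt ξ ε' ≤ pre ξ ε n := by
        rw [hsplit]
        have h5 : L ξ (j+1) ≤ L ξ j * (1 - ξ j) := by rw [hLs]; nlinarith [hxj.1, hxj.2]
        have := hnest.1
        rw [hpj] at this
        linarith
      nlinarith [hxn.1, hxn.2]

set_option maxHeartbeats 2000000 in
lemma key {ρ : ℝ} (hρ : ρ < 1/2) (N : ℕ) (hN : ∀ n, N ≤ n → ξ n ≤ ρ) :
    ∃ c₀ > 0, c₀ ≤ 1/6 ∧ ∀ x h : ℝ, 0 < h → h ≤ 1 →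
      ∃ p : ℝ, x < p ∧ p ≤ x + h ∧
        ∀ (ε : ℕ → Bool) (k : ℤ), c₀ * h ≤ |p - (pt ξ ε + k)| := by
  classical
  have hρ0 : 0 < ρ := lt_of_lt_of_le (hξ N).1 (hN N le_rfl)
  have hLN := Lpos hξ N
  set c₀ := min (L ξ N) (1/6) * (1 - 2*ρ) / 2 with hc₀
  have hmin_pos : 0 < min (L ξ N) (1/6) := lt_min hLN (by norm_num)
  have hc₀pos : 0 < c₀ := by
    apply div_pos (mul_pos hmin_pos (by linarith)) (by norm_num)
  clear_value c₀
  have hmin16 : min (L ξ N) (1/6) ≤ 1/6 := min_le_right _ _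
  have hc₀16 : c₀ ≤ 1/6 := by nlinarith
  refine ⟨c₀, hc₀pos, hc₀16, fun x h hh hh1 => ?_⟩
  by_cases hB : ∃ (ε : ℕ → Bool) (k : ℤ), x + h/3 ≤ pt ξ ε + k ∧ pt ξ ε + k ≤ x + 2*h/3
  · obtain ⟨ε₀, k₀, hs1, hs2⟩ := hB
    set s := pt ξ ε₀ with hs
    clear_value s
    obtain ⟨m, hmN, hm1, hm2⟩ :
        ∃ m : ℕ, N ≤ m ∧ L ξ (m+1) ≤ h/6 ∧ min (L ξ N) (h/6) ≤ L ξ m := by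
      classical
      have hex : ∃ j : ℕ, L ξ (N + j + 1) ≤ h/6 := by
        obtain ⟨j, hj⟩ := exists_pow_lt_of_lt_one (show (0:ℝ) < h/6 by linarith)
          (by norm_num : (1/2:ℝ) < 1)
        refine ⟨j, (Lle hξ _).trans (le_of_lt (lt_of_le_of_lt ?_ hj))⟩
        exact pow_le_pow_of_le_one (by norm_num) (by norm_num) (by omega)
      refine ⟨N + Nat.find hex, Nat.le_add_right _ _, Nat.find_spec hex, ?_⟩
      rcases Nat.eq_zero_or_pos (Nat.find hex) with h0 | h0
      · rw [h0]
        simpa using min_le_left (L ξ N) (h/6)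
      · have hlt := Nat.find_min hex (Nat.sub_lt h0 one_pos)
        push_neg at hlt
        have he : N + (Nat.find hex - 1) + 1 = N + Nat.find hex := by omega
        rw [he] at hlt
        exact (min_le_right _ _).trans hlt.le
    set A := pre ξ ε₀ m with hA
    clear_value A
    have hA0 : 0 ≤ A := by rw [hA]; exact pre_nonneg hξ ε₀ m
    set u := A + L ξ m * ξ m with hu
    set v := A + L ξ m * (1 - ξ m) with hv
    clear_value u v
    have hLm := Lpos hξ m
    have hξm := hξ m
    have hLs : L ξ (m+1) = L ξ m * ξ m := Lsucc hξ m
    have hL1pos := Lpos hξ (m+1)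
    have hgpos : 0 < v - u := by rw [hu, hv]; nlinarith [hξm.1, hξm.2]
    have hρm : ξ m ≤ ρ := hN m hmN
    have hgρ : L ξ m * (1 - 2*ρ) ≤ v - u := by rw [hu, hv]; nlinarith
    set t := min (v - u) (h/6) / 2 with ht
    clear_value t
    have ht0 : 0 < t := by
      rw [ht]
      exact div_pos (lt_min hgpos (by linarith)) (by norm_num)
    have htg : 2 * t ≤ v - u := by
      have := min_le_left (v - u) (h/6); linarith
    have hth : t ≤ h/12 := by
      have := min_le_right (v - u) (h/6); linarith
    -- v ≤ 1
    have hv1 : v ≤ 1 := by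
      set ε1 : ℕ → Bool := fun k => if k = m then true else ε₀ k with hε1
      have hpre1 : pre ξ ε1 m = A := by
        rw [hA]
        refine Finset.sum_congr rfl fun k hk => ?_
        have hkm : k ≠ m := Nat.ne_of_lt (Finset.mem_range.mp hk)
        rw [trm_eq, trm_eq]
        have he : ε1 k = ε₀ k := by simp [hε1, hkm]
        rw [he]
      have htrm1 : trm ξ ε1 m = L ξ m * (1 - ξ m) := by
        rw [trm_eq]
        have he : ε1 m = true := by simp [hε1]
        rw [he]; simp
      have htl1 : L ξ m * (1 - ξ m) ≤ tl ξ ε1 m := by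
        rw [tl_succ hξ, htrm1]
        have := tl_nonneg hξ ε1 (m+1)
        linarith
      have hle1 := pt_le_one hξ ε1
      rw [pt_split hξ ε1 m, hpre1] at hle1
      rw [hv]; linarith
    have hsplit : s = A + tl ξ ε₀ m := by rw [hs, hA]; exact pt_split hξ ε₀ m
    have htlb := tl_nonneg hξ ε₀ (m+1)
    have htub := tl_le hξ ε₀ (m+1)
    obtain ⟨p, hpu, hpv, hps⟩ :
        ∃ p : ℝ, t ≤ p - u ∧ t ≤ v - p ∧ |p - s| ≤ L ξ (m+1) + t := by
      cases hb : ε₀ m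
      · refine ⟨u + t, by linarith, by linarith, ?_⟩
        have heq : tl ξ ε₀ m = tl ξ ε₀ (m+1) := by
          rw [tl_succ hξ, trm_eq, hb]; simp
        rw [abs_le]
        constructor <;> [skip; skip] <;>
          · rw [hsplit, heq, hu]; linarith
      · refine ⟨v - t, by linarith, by linarith, ?_⟩
        have heq : tl ξ ε₀ m = L ξ m * (1 - ξ m) + tl ξ ε₀ (m+1) := by
          rw [tl_succ hξ, trm_eq, hb]; simp
        rw [abs_le]
        constructor <;>
          · rw [hsplit, heq, hv]; linarith
    have hp3 : |p - s| ≤ h/4 := hps.trans (by linarith)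
    obtain ⟨hp3a, hp3b⟩ := abs_le.mp hp3
    have hu0 : 0 ≤ u := by
      rw [hu]
      have := mul_nonneg hLm.le hξm.1.le
      linarith
    have hct : c₀ * h ≤ t := by
      have e1 : min (L ξ N) (1/6) * h ≤ min (L ξ N) (h/6) := by
        rcases le_total (L ξ N) (h/6) with hc | hc
        · rw [min_eq_left hc]
          have h1 : min (L ξ N) (1/6) ≤ L ξ N := min_le_left _ _
          nlinarith
        · rw [min_eq_right hc]
          nlinarith
      have e2 : min (L ξ N) (h/6) * (1 - 2*ρ) ≤ min (v - u) (h/6) := by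
        apply le_min
        · nlinarith
        · have h1 : min (L ξ N) (h/6) ≤ h/6 := min_le_right _ _
          nlinarith
      have e3 : min (L ξ N) (1/6) * h * (1 - 2*ρ) ≤ min (L ξ N) (h/6) * (1 - 2*ρ) := by
        nlinarith
      have e4 := e3.trans e2
      rw [hc₀, ht]; linarith
    refine ⟨p + k₀, by linarith, by linarith, fun ε k => ?_⟩
    have hre : p + (k₀:ℝ) - (pt ξ ε + (k:ℝ)) = p - (pt ξ ε + ((k - k₀ : ℤ) : ℝ)) := by
      push_cast; ring
    rw [hre]
    set κ := k - k₀ with hκ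
    have hptε0 := pt_nonneg hξ ε
    have hptε1 := pt_le_one hξ ε
    rcases lt_trichotomy κ 0 with hκ1 | hκ1 | hκ1
    · have hκr : (κ:ℝ) ≤ -1 := by exact_mod_cast (by omega : κ ≤ -1)
      refine le_abs.mpr (Or.inl ?_)
      linarith
    · rw [hκ1]
      have hsep : pt ξ ε ≤ u ∨ v ≤ pt ξ ε := by
        by_contra hc
        push_neg at hc
        have havoid := avoid hξ ε₀ ε m
        rw [← hA, ← hu, ← hv] at havoid
        exact havoid ⟨hc.1, hc.2⟩
      push_cast
      rcases hsep with hle | hle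
      · refine le_abs.mpr (Or.inl ?_); linarith
      · refine le_abs.mpr (Or.inr ?_); linarith
    · have hκr : (1:ℝ) ≤ (κ:ℝ) := by exact_mod_cast (by omega : 1 ≤ κ)
      refine le_abs.mpr (Or.inr ?_)
      linarith
  · push_neg at hB
    refine ⟨x + h/2, by linarith, by linarith, fun ε k => ?_⟩
    have hc := hB ε k
    rcases le_or_gt (x + h/3) (pt ξ ε + k) with h1 | h1
    · have h2 := hc h1
      refine le_abs.mpr (Or.inr ?_)
      nlinarith
    · refine le_abs.mpr (Or.inl ?_)
      nlinarith

end basic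

end S9
end

noncomputable section
namespace S9aux

lemma chord_lb {θ β c : ℝ} (hc : 0 ≤ c) (hk : ∀ k : ℤ, c ≤ |θ - β - 2*Real.pi*k|) :
    2/Real.pi * c ≤ ‖Complex.exp ((θ:ℂ)*Complex.I) - Complex.exp ((β:ℂ)*Complex.I)‖ := by
  have hπ := Real.pi_pos
  have h1 : ‖Complex.exp ((θ:ℂ)*Complex.I)‖ = 1 := by
    exact Complex.norm_exp_ofReal_mul_I θ
  have h2 : ‖Complex.exp ((β:ℂ)*Complex.I)‖ = 1 := by
    exact Complex.norm_exp_ofReal_mul_I β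
  have h3 := Complex.mul_angle_le_norm_sub h1 h2
  rw [Complex.angle_exp_exp] at h3
  have h4 : c ≤ |toIocMod Real.two_pi_pos (-Real.pi) (θ - β)| := by
    rw [toIocMod, zsmul_eq_mul]
    have h5 := hk (toIocDiv Real.two_pi_pos (-Real.pi) (θ - β))
    have he : θ - β - 2*Real.pi*(toIocDiv Real.two_pi_pos (-Real.pi) (θ - β) : ℤ)
        = θ - β - (toIocDiv Real.two_pi_pos (-Real.pi) (θ - β) : ℤ) * (2*Real.pi) := by ring
    rw [he] at h5
    exact h5
  calc 2/Real.pi * c ≤ 2/Real.pi * |toIocMod Real.two_pi_pos (-Real.pi) (θ - β)| := by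
        apply mul_le_mul_of_nonneg_left h4
        positivity
    _ ≤ _ := h3

end S9aux
end


/-- A generalized Cantor set with `limsup ζ_n < 1/2` is a `𝒦`-set. -/
theorem statement9 (ξ : ℕ → ℝ) (hξ : ∀ n, ξ n ∈ Set.Ioo (0:ℝ) (1/2))
    (hlim : Filter.limsup ξ Filter.atTop < 1/2) :
    KSet (gCantorSet ξ) := by
  classical
  have hπ := Real.pi_pos
  have hbd : Filter.IsBoundedUnder (· ≤ ·) Filter.atTop ξ :=
    Filter.isBoundedUnder_of ⟨1/2, fun n => (hξ n).2.le⟩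
  set l := Filter.limsup ξ Filter.atTop with hl
  set ρ := (max l (1/4) + 1/2)/2 with hρdef
  have hmax : max l (1/4) < 1/2 := max_lt hlim (by norm_num)
  have h1 : l < ρ := by
    have := le_max_left l (1/4)
    rw [hρdef]; linarith
  have h2 : ρ < 1/2 := by rw [hρdef]; linarith
  have hev := Filter.eventually_lt_of_limsup_lt h1 hbd
  obtain ⟨N, hN⟩ := Filter.eventually_atTop.mp hev
  obtain ⟨c₀, hc₀pos, hc₀16, hkey⟩ := S9.key hξ h2 N (fun n hn => (hN n hn).le)
  refine ⟨c₀/2, by linarith, fun a b hab hab2 => ?_⟩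
  set h := (b - a)/(2*π) with hhdef
  have h2π : (0:ℝ) < 2*π := by linarith
  have hh : 0 < h := div_pos (by linarith) h2π
  have hh1 : h ≤ 1 := by
    rw [hhdef, div_le_one h2π]; linarith
  obtain ⟨p, hp1, hp2, hp3⟩ := hkey (a/(2*π)) h hh hh1
  have hθ1 : a < 2*π*p := by
    have := (div_lt_iff₀ h2π).mp hp1
    linarith
  have hθ2 : 2*π*p ≤ b := by
    have he : a/(2*π) + h = b/(2*π) := by rw [hhdef]; field_simp; ring
    rw [he] at hp2
    have := (le_div_iff₀ h2π).mp hp2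
    linarith
  -- membership of cantor points
  have hmemE : ∀ ε : ℕ → Bool,
      Complex.exp (((2*π*(S9.pt ξ ε) : ℝ) : ℂ) * Complex.I) ∈ gCantorSet ξ := by
    intro ε
    refine ⟨ε, ?_⟩
    have hpt : (∑' n : ℕ, (if ε n then (1:ℝ) else 0) *
        (∏ k ∈ Finset.range n, ξ k) * (1 - ξ n)) = S9.pt ξ ε := rfl
    rw [hpt]
    congr 1
    push_cast
    ring
  have hEne : (gCantorSet ξ).Nonempty := ⟨_, hmemE (fun _ => false)⟩
  -- lower bound for the chosen point
  have hlow : c₀/2 * (b - a) ≤ dE (gCantorSet ξ) (cpt (2*π*p)) := by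
    rw [dE]
    refine le_of_not_gt fun hcon => ?_
    obtain ⟨z, hzE, hdz⟩ := (Metric.infDist_lt_iff hEne).mp hcon
    obtain ⟨ε, hz⟩ := hzE
    set s' := S9.pt ξ ε with hs'
    have hz2 : z = Complex.exp (((2*π*s' : ℝ) : ℂ) * Complex.I) := by
      rw [hz]
      have hpt : (∑' n : ℕ, (if ε n then (1:ℝ) else 0) *
          (∏ k ∈ Finset.range n, ξ k) * (1 - ξ n)) = s' := rfl
      rw [hpt]
      congr 1
      push_cast
      ring
    have hk : ∀ k : ℤ, 2*π*(c₀*h) ≤ |2*π*p - 2*π*s' - 2*π*k| := by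
      intro k
      have h5 := hp3 ε k
      rw [← hs'] at h5
      have he : 2*π*p - 2*π*s' - 2*π*(k:ℝ) = 2*π*(p - (s' + k)) := by ring
      rw [he, abs_mul, abs_of_pos h2π]
      have := abs_nonneg (p - (s' + (k:ℝ)))
      nlinarith
    have hchord := S9aux.chord_lb (θ := 2*π*p) (β := 2*π*s')
      (c := 2*π*(c₀*h)) (by positivity) hk
    have hdist : dist (cpt (2*π*p)) z
        = ‖Complex.exp (((2*π*p : ℝ):ℂ)*Complex.I) - Complex.exp (((2*π*s' : ℝ):ℂ)*Complex.I)‖ := by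
      rw [hz2, cpt, Complex.dist_eq]
    have hsimp : 2/π*(2*π*(c₀*h)) = 4*(c₀*h) := by
      field_simp
      ring
    rw [hsimp] at hchord
    have hπ4 : π ≤ 4 := by nlinarith [Real.pi_le_four]
    have hfin : c₀/2 * (b - a) ≤ 4*(c₀*h) := by
      rw [hhdef, show 4*(c₀*((b-a)/(2*π))) = (4*(c₀*(b-a)))/(2*π) by ring,
        le_div_iff₀ h2π]
      have hD : (0:ℝ) ≤ c₀*(b-a) := by nlinarith
      nlinarith [mul_le_mul_of_nonneg_left hπ4 hD]
    rw [hdist] at hdz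
    linarith
  -- conclude via sSup
  have hbdd : BddAbove ((fun θ => dE (gCantorSet ξ) (cpt θ)) '' Set.Ioc a b) := by
    refine ⟨2, fun y hy => ?_⟩
    obtain ⟨θ', hθ', rfl⟩ := hy
    have hz0 := hmemE (fun _ => false)
    show Metric.infDist (cpt θ') (gCantorSet ξ) ≤ 2
    refine (Metric.infDist_le_dist_of_mem hz0).trans ((dist_le_norm_add_norm _ _).trans ?_)
    have e1 : ‖cpt θ'‖ = 1 := by
      rw [cpt]; exact Complex.norm_exp_ofReal_mul_I θ'
    have e2 : ‖Complex.exp (((2*π*(S9.pt ξ (fun _ => false)) : ℝ):ℂ) * Complex.I)‖ = 1 := by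
      exact Complex.norm_exp_ofReal_mul_I _
    rw [e1, e2]
    norm_num
  have hmem : dE (gCantorSet ξ) (cpt (2*π*p))
      ∈ (fun θ => dE (gCantorSet ξ) (cpt θ)) '' Set.Ioc a b := ⟨2*π*p, ⟨hθ1, hθ2⟩, rfl⟩
  rw [arcSup]
  exact hlow.trans (le_csSup hbdd hmem)
end
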